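/- Limit-weight convergence of the unified QP to the safety-first hierarchy (first two stages): Let F ⊆ ℝ^m × ℝ × ℝ be a nonempty set of feasible triples (u, δ₁, δ₂), let H be an m×m positive semidefinite real matrix, k ∈ ℝ^m, and set g(u) = (u − k)ᵀ H (u − k). Suppose (u*, δ₁*, δ₂*) ∈ F satisfies (δ₂*)² ≤ δ₂² for every (u, δ₁, δ₂) ∈ F (the CBF slack is minimal in absolute value over F). For each q > 0 let (u_q, δ₁_q, δ₂_q) ∈ F be a minimizer over F of the weighted objective J_q(u, δ₁, δ₂) = g(u) + q δ₁² + q² δ₂². Then (i) (δ₂_q)² → (δ₂*)² as q → ∞, and (ii) limsup_{q→∞} (δ₁_q)² ≤ (δ₁*)². -/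

import Mathlib

open Filter

/-- Limit-weight convergence of the unified QP to the safety-first hierarchy
(first two stages): minimizers of `g(u) + q δ₁² + q² δ₂²` over the feasible set `F`
recover the minimal CBF slack (in square) in the limit `q → ∞`, and the limsup of the
squared CLF slacks is bounded by the hierarchical value `(δ₁*)²`. -/
theorem limit_weight_convergence
    (m : ℕ) (F : Set ((Fin m → ℝ) × ℝ × ℝ)) (hF : F.Nonempty)
    (H : Matrix (Fin m) (Fin m) ℝ) (hH : H.PosSemidef) (k : Fin m → ℝ)
    (pstar : (Fin m → ℝ) × ℝ × ℝ) (hstar : pstar ∈ F)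
    (hmin : ∀ p ∈ F, pstar.2.2 ^ 2 ≤ p.2.2 ^ 2)
    (sel : ℝ → (Fin m → ℝ) × ℝ × ℝ)
    (hselF : ∀ q > (0 : ℝ), sel q ∈ F)
    (hselmin : ∀ q > (0 : ℝ), ∀ p ∈ F,
      dotProduct ((sel q).1 - k) (H.mulVec ((sel q).1 - k))
          + q * (sel q).2.1 ^ 2 + q ^ 2 * (sel q).2.2 ^ 2 ≤
        dotProduct (p.1 - k) (H.mulVec (p.1 - k))
          + q * p.2.1 ^ 2 + q ^ 2 * p.2.2 ^ 2) :
    Tendsto (fun q => (sel q).2.2 ^ 2) atTop (nhds (pstar.2.2 ^ 2)) ∧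
    limsup (fun q => (sel q).2.1 ^ 2) atTop ≤ pstar.2.1 ^ 2 := by
  set g : ((Fin m → ℝ) × ℝ × ℝ) → ℝ :=
    fun p => dotProduct (p.1 - k) (H.mulVec (p.1 - k)) with hg
  have hg0 : ∀ p : (Fin m → ℝ) × ℝ × ℝ, 0 ≤ g p := by
    intro p
    have := hH.dotProduct_mulVec_nonneg (p.1 - k)
    simpa only [star_trivial] using this
  set C : ℝ := g pstar + pstar.2.1 ^ 2 with hC
  have hCnn : 0 ≤ C := add_nonneg (hg0 _) (sq_nonneg _)
  -- key bound from optimality at pstar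
  have key : ∀ q > (0 : ℝ),
      q ^ 2 * (sel q).2.2 ^ 2 + q * (sel q).2.1 ^ 2 ≤
        g pstar + q * pstar.2.1 ^ 2 + q ^ 2 * pstar.2.2 ^ 2 := by
    intro q hq
    have h := hselmin q hq pstar hstar
    have h0 := hg0 (sel q)
    linarith
  -- (i) squeeze
  have hlow : ∀ q > (0 : ℝ), pstar.2.2 ^ 2 ≤ (sel q).2.2 ^ 2 :=
    fun q hq => hmin _ (hselF q hq)
  have hup : ∀ q ≥ (1 : ℝ), (sel q).2.2 ^ 2 ≤ pstar.2.2 ^ 2 + C / q := by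
    intro q hq
    have hq0 : (0 : ℝ) < q := lt_of_lt_of_le one_pos hq
    have h := key q hq0
    have h2 : 0 ≤ q * (sel q).2.1 ^ 2 := mul_nonneg hq0.le (sq_nonneg _)
    have hq2 : (0 : ℝ) < q ^ 2 := by positivity
    -- q^2 * δ₂q² ≤ g* + q*δ₁*² + q² δ₂*²
    have h3 : q ^ 2 * (sel q).2.2 ^ 2 ≤ g pstar + q * pstar.2.1 ^ 2 + q ^ 2 * pstar.2.2 ^ 2 := by
      linarith
    have h4 : (sel q).2.2 ^ 2 ≤ (g pstar + q * pstar.2.1 ^ 2) / q ^ 2 + pstar.2.2 ^ 2 := by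
      rw [div_add' _ _ _ (ne_of_gt hq2)]
      rw [le_div_iff₀ hq2]
      linarith
    have h5 : (g pstar + q * pstar.2.1 ^ 2) / q ^ 2 ≤ C / q := by
      rw [div_le_div_iff₀ hq2 hq0]
      have : q ≤ q ^ 2 := by nlinarith
      nlinarith [hg0 pstar, sq_nonneg pstar.2.1]
    linarith
  have htendC : Tendsto (fun q : ℝ => pstar.2.2 ^ 2 + C / q) atTop (nhds (pstar.2.2 ^ 2)) := by
    have : Tendsto (fun q : ℝ => C / q) atTop (nhds 0) :=
      Tendsto.div_atTop tendsto_const_nhds tendsto_id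
    simpa using tendsto_const_nhds.add this
  have part1 : Tendsto (fun q => (sel q).2.2 ^ 2) atTop (nhds (pstar.2.2 ^ 2)) := by
    refine tendsto_of_tendsto_of_tendsto_of_le_of_le' tendsto_const_nhds htendC ?_ ?_
    · filter_upwards [eventually_ge_atTop (1 : ℝ)] with q hq
      exact hlow q (lt_of_lt_of_le one_pos hq)
    · filter_upwards [eventually_ge_atTop (1 : ℝ)] with q hq
      exact hup q hq
  -- (ii)
  have hup1 : ∀ q ≥ (1 : ℝ), (sel q).2.1 ^ 2 ≤ pstar.2.1 ^ 2 + g pstar / q := by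
    intro q hq
    have hq0 : (0 : ℝ) < q := lt_of_lt_of_le one_pos hq
    have h := key q hq0
    have hl := hlow q hq0
    have hq2 : (0 : ℝ) ≤ q ^ 2 := sq_nonneg _
    have h3 : q * (sel q).2.1 ^ 2 ≤ g pstar + q * pstar.2.1 ^ 2 := by nlinarith
    have h4 : (sel q).2.1 ^ 2 ≤ (g pstar + q * pstar.2.1 ^ 2) / q := by
      rw [le_div_iff₀ hq0]; linarith [mul_comm ((sel q).2.1 ^ 2) q]
    have heq : (g pstar + q * pstar.2.1 ^ 2) / q = g pstar / q + pstar.2.1 ^ 2 := by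
      field_simp
    rw [heq] at h4; linarith
  have htendC2 : Tendsto (fun q : ℝ => pstar.2.1 ^ 2 + g pstar / q) atTop (nhds (pstar.2.1 ^ 2)) := by
    have : Tendsto (fun q : ℝ => g pstar / q) atTop (nhds 0) :=
      Tendsto.div_atTop tendsto_const_nhds tendsto_id
    simpa using tendsto_const_nhds.add this
  have part2 : limsup (fun q => (sel q).2.1 ^ 2) atTop ≤ pstar.2.1 ^ 2 := by
    have hb : limsup (fun q : ℝ => pstar.2.1 ^ 2 + g pstar / q) atTop = pstar.2.1 ^ 2 :=
      htendC2.limsup_eq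
    rw [← hb]
    apply limsup_le_limsup
    · filter_upwards [eventually_ge_atTop (1 : ℝ)] with q hq
      exact hup1 q hq
    · refine IsCoboundedUnder.of_frequently_ge (a := 0) ?_
      exact Frequently.of_forall fun q => sq_nonneg _
    · exact htendC2.isBoundedUnder_le
  exact ⟨part1, part2⟩
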